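/- Let Ω ⊂ ℝⁿ be a compact convex domain, σ: Ω → ℝ positive continuous, p₁,…,p_k ∈ ℝⁿ distinct, and A₁,…,A_k > 0 with ∑ A_i = ∫_Ω σ(x) dx. Then there exists b ∈ ℝᵏ such that for u_b(x) = max_i(x·p_i + b_i), the cells W_i(b) = { x : ∇u_b(x) = p_i } satisfy ∫_{W_i(b)∩Ω} σ(x) dx = A_i for all i. -/

import Mathlib

open MeasureTheory
open scoped RealInnerProductSpace

namespace AlexAux

variable {n k : ℕ} [Nonempty (Fin k)]

local notation "E" => EuclideanSpace ℝ (Fin n)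

noncomputable def uu (p : Fin k → E) (b : Fin k → ℝ) (x : E) : ℝ :=
  Finset.univ.sup' Finset.univ_nonempty (fun i => ⟪x, p i⟫ + b i)

lemma le_uu (p : Fin k → E) (b : Fin k → ℝ) (x : E) (i : Fin k) :
    ⟪x, p i⟫ + b i ≤ uu p b x := by
  unfold uu; exact Finset.le_sup' (fun i => ⟪x, p i⟫ + b i) (Finset.mem_univ i)

lemma uu_le {p : Fin k → E} {b : Fin k → ℝ} {x : E} {c : ℝ}
    (h : ∀ i, ⟪x, p i⟫ + b i ≤ c) : uu p b x ≤ c :=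
  Finset.sup'_le _ _ fun i _ => h i

lemma exists_uu_eq (p : Fin k → E) (b : Fin k → ℝ) (x : E) :
    ∃ i, uu p b x = ⟪x, p i⟫ + b i := by
  obtain ⟨i, -, h⟩ := Finset.exists_mem_eq_sup' (Finset.univ_nonempty (α := Fin k))
    (fun i => ⟪x, p i⟫ + b i)
  exact ⟨i, h⟩

lemma continuous_uu (p : Fin k → E) (b : Fin k → ℝ) : Continuous (uu p b) :=
  Continuous.finset_sup'_apply Finset.univ_nonempty fun i _ =>
    ((continuous_id.inner continuous_const).add continuous_const)

lemma uu_mono {p : Fin k → E} {b b' : Fin k → ℝ} (h : ∀ i, b i ≤ b' i) (x : E) :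
    uu p b x ≤ uu p b' x :=
  uu_le fun i => le_trans (by linarith [h i]) (le_uu p b' x i)

lemma uu_sub_const (p : Fin k → E) (b : Fin k → ℝ) (s : ℝ) (x : E) :
    uu p (fun i => b i - s) x = uu p b x - s := by
  apply le_antisymm
  · exact uu_le fun i => by linarith [le_uu p b x i]
  · obtain ⟨i, hi⟩ := exists_uu_eq p b x
    have := le_uu p (fun i => b i - s) x i
    linarith

lemma abs_uu_sub_le (p : Fin k → E) (b b' : Fin k → ℝ) (x : E) :
    |uu p b x - uu p b' x| ≤ dist b b' := by
  have h1 : ∀ (c c' : Fin k → ℝ), uu p c x - uu p c' x ≤ dist c c' := by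
    intro c c'
    obtain ⟨i, hi⟩ := exists_uu_eq p c x
    have h2 := le_uu p c' x i
    have h3 : c i - c' i ≤ dist c c' := by
      calc c i - c' i ≤ |c i - c' i| := le_abs_self _
        _ = dist (c i) (c' i) := (Real.dist_eq _ _).symm
        _ ≤ dist c c' := dist_le_pi_dist c c' i
    linarith
  rw [abs_sub_le_iff]
  exact ⟨by simpa using h1 b b', by simpa [dist_comm] using h1 b' b⟩

lemma hyperplane_null (v : E) (hv : v ≠ 0) (c : ℝ) :
    MeasureTheory.volume {x : E | ⟪x, v⟫ = c} = 0 := by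
  set x₀ : E := (c / ‖v‖ ^ 2) • v with hx₀
  have hvv : ⟪v, v⟫ = ‖v‖ ^ 2 := real_inner_self_eq_norm_sq v
  have hnv : (0:ℝ) < ‖v‖ ^ 2 := pow_pos (norm_pos_iff.mpr hv) 2
  have hx₀v : ⟪x₀, v⟫ = c := by
    rw [hx₀, real_inner_smul_left, hvv]
    field_simp
  set s : AffineSubspace ℝ E := AffineSubspace.mk' x₀ (LinearMap.ker (innerSL ℝ v).toLinearMap) with hs
  have hmem : ∀ x : E, x ∈ s ↔ ⟪x, v⟫ = c := by
    intro x
    rw [hs, AffineSubspace.mem_mk']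
    simp only [vsub_eq_sub, LinearMap.mem_ker, ContinuousLinearMap.coe_coe, innerSL_apply_apply]
    rw [inner_sub_right]
    have h1 : ⟪v, x⟫ = ⟪x, v⟫ := real_inner_comm x v
    have h2 : ⟪v, x₀⟫ = c := by rw [real_inner_comm]; exact hx₀v
    constructor
    · intro h; linarith
    · intro h; linarith
  have hset : {x : E | ⟪x, v⟫ = c} = (s : Set E) := by
    ext x; simp [hmem x, Set.mem_setOf_eq]
  have hne : s ≠ ⊤ := by
    intro htop
    have : x₀ + v ∈ s := htop ▸ AffineSubspace.mem_top ℝ E _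
    rw [hmem] at this
    rw [inner_add_left, hx₀v, real_inner_self_eq_norm_sq] at this
    nlinarith
  rw [hset]
  exact Measure.addHaar_affineSubspace volume s hne


section Claims

variable {Ω : Set (EuclideanSpace ℝ (Fin n))} {p : Fin k → EuclideanSpace ℝ (Fin n)}
  {σ : EuclideanSpace ℝ (Fin n) → ℝ}

lemma integrableOn_uu (hΩc : IsCompact Ω) (hσ : ContinuousOn σ Ω) (b : Fin k → ℝ) :
    IntegrableOn (fun x => uu p b x * σ x) Ω :=
  ((continuous_uu p b).continuousOn.mul hσ).integrableOn_compact hΩc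

lemma claimA (hΩc : IsCompact Ω) (hσ : ContinuousOn σ Ω) (hσ0 : ∀ x ∈ Ω, 0 ≤ σ x)
    (A : ℝ) (b : Fin k → ℝ) (j : Fin k)
    (hmin : ∀ t : ℝ, 0 < t →
      t * A ≤ (∫ x in Ω, uu p (Function.update b j (b j + t)) x * σ x)
        - ∫ x in Ω, uu p b x * σ x) :
    A ≤ ∫ x in ({x : EuclideanSpace ℝ (Fin n) |
        ∀ i, ⟪x, p i⟫ + b i ≤ ⟪x, p j⟫ + b j} ∩ Ω), σ x := by
  have hΩm : MeasurableSet Ω := hΩc.measurableSet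
  set W : Set (EuclideanSpace ℝ (Fin n)) :=
    {x | ∀ i, ⟪x, p i⟫ + b i ≤ ⟪x, p j⟫ + b j} with hW
  have hWm : MeasurableSet W := by
    have : W = ⋂ i, {x : EuclideanSpace ℝ (Fin n) | ⟪x, p i⟫ + b i ≤ ⟪x, p j⟫ + b j} := by
      ext x; simp [hW, Set.mem_iInter]
    rw [this]
    exact MeasurableSet.iInter fun i => (isClosed_le
      ((continuous_id.inner continuous_const).add continuous_const)
      ((continuous_id.inner continuous_const).add continuous_const)).measurableSet
  set t : ℕ → ℝ := fun m => 1 / (m + 1) with hT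
  have ht : ∀ m, 0 < t m := fun m => by positivity
  have htend : Filter.Tendsto t Filter.atTop (nhds 0) :=
    tendsto_one_div_add_atTop_nhds_zero_nat
  set bt : ℕ → (Fin k → ℝ) := fun m => Function.update b j (b j + t m) with hbt
  have hble : ∀ m i, b i ≤ bt m i := by
    intro m i
    rcases eq_or_ne i j with rfl | h
    · simp [hbt, (ht m).le]
    · simp [hbt, Function.update_of_ne h]
  have hb2 : ∀ m x, uu p (bt m) x ≤ uu p b x + t m := by
    intro m x
    refine uu_le fun i => ?_
    rcases eq_or_ne i j with rfl | h
    · simp only [hbt, Function.update_self]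
      linarith [le_uu p b x i]
    · simp only [hbt, Function.update_of_ne h]
      linarith [le_uu p b x i, (ht m).le]
  set Fn : ℕ → EuclideanSpace ℝ (Fin n) → ℝ :=
    fun m x => (t m)⁻¹ * ((uu p (bt m) x - uu p b x) * σ x) with hFn
  have hlim : ∀ x, Filter.Tendsto (fun m => Fn m x) Filter.atTop
      (nhds (W.indicator σ x)) := by
    intro x
    by_cases hx : x ∈ W
    · rw [Set.indicator_of_mem hx]
      have hval : ∀ m, uu p (bt m) x = uu p b x + t m := by
        intro m
        refine le_antisymm (hb2 m x) ?_
        have h1 : uu p b x = ⟪x, p j⟫ + b j :=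
          le_antisymm (uu_le fun i => hx i) (le_uu p b x j)
        have := le_uu p (bt m) x j
        simp only [hbt, Function.update_self] at this
        linarith
      have : ∀ m, Fn m x = σ x := by
        intro m
        rw [hFn]; simp only; rw [hval m]
        field_simp [(ht m).ne']
        ring
      simpa [this] using tendsto_const_nhds
    · rw [Set.indicator_of_notMem hx]
      simp only [hW, Set.mem_setOf_eq, not_forall, not_le] at hx
      obtain ⟨i₀, hi₀⟩ := hx
      have hg : 0 < uu p b x - (⟪x, p j⟫ + b j) := by
        have := le_uu p b x i₀; linarith
      have heq : ∀ m, t m < uu p b x - (⟪x, p j⟫ + b j) → Fn m x = 0 := by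
        intro m hm
        have hval : uu p (bt m) x = uu p b x := by
          refine le_antisymm (uu_le fun i => ?_) (uu_mono (p := p) (hble m) x)
          rcases eq_or_ne i j with rfl | h
          · simp only [hbt, Function.update_self]; linarith
          · simp only [hbt, Function.update_of_ne h]; exact le_uu p b x i
        rw [hFn]; simp only; rw [hval]; ring
      have hev : ∀ᶠ m in Filter.atTop, Fn m x = 0 :=
        (htend.eventually (gt_mem_nhds hg)).mono fun m hm => heq m hm
      exact Filter.Tendsto.congr' (hev.mono fun m hm => hm.symm) tendsto_const_nhds
  have hmeas : ∀ m, AEStronglyMeasurable (Fn m) (volume.restrict Ω) := by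
    intro m
    exact (continuousOn_const.mul
      ((((continuous_uu p (bt m)).sub (continuous_uu p b)).continuousOn).mul hσ)
      ).aestronglyMeasurable hΩm
  have hbound : ∀ m, ∀ᵐ x ∂(volume.restrict Ω), ‖Fn m x‖ ≤ σ x := by
    intro m
    refine (ae_restrict_iff' hΩm).2 (Filter.Eventually.of_forall fun x hx => ?_)
    have h1 : 0 ≤ uu p (bt m) x - uu p b x := by linarith [uu_mono (p := p) (hble m) x]
    have h2 : uu p (bt m) x - uu p b x ≤ t m := by linarith [hb2 m x]
    have h3 : 0 ≤ σ x := hσ0 x hx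
    have h4 : 0 ≤ Fn m x := by
      rw [hFn]; exact mul_nonneg (inv_nonneg.2 (ht m).le) (mul_nonneg h1 h3)
    rw [Real.norm_eq_abs, abs_of_nonneg h4]
    calc Fn m x ≤ (t m)⁻¹ * (t m * σ x) :=
          mul_le_mul_of_nonneg_left (mul_le_mul_of_nonneg_right h2 h3)
            (inv_nonneg.2 (ht m).le)
      _ = σ x := by field_simp [(ht m).ne']
  have hσint : IntegrableOn σ Ω := hσ.integrableOn_compact hΩc
  have hconv := MeasureTheory.tendsto_integral_of_dominated_convergence σ hmeas hσint
    hbound (Filter.Eventually.of_forall hlim)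
  have hindval : (∫ x in Ω, W.indicator σ x) = ∫ x in (W ∩ Ω), σ x := by
    rw [MeasureTheory.setIntegral_indicator hWm, Set.inter_comm]
  rw [hindval] at hconv
  refine ge_of_tendsto hconv (Filter.Eventually.of_forall fun m => ?_)
  have hint : (∫ x in Ω, Fn m x) = (t m)⁻¹ *
      ((∫ x in Ω, uu p (bt m) x * σ x) - ∫ x in Ω, uu p b x * σ x) := by
    rw [hFn]
    simp only
    rw [MeasureTheory.integral_const_mul]
    congr 1
    have : ∀ x, (uu p (bt m) x - uu p b x) * σ x
        = uu p (bt m) x * σ x - uu p b x * σ x := fun x => by ring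
    simp_rw [this]
    exact MeasureTheory.integral_sub (integrableOn_uu hΩc hσ (bt m))
      (integrableOn_uu hΩc hσ b)
  rw [hint]
  have := hmin (t m) (ht m)
  calc A = (t m)⁻¹ * (t m * A) := by field_simp [(ht m).ne']
    _ ≤ _ := mul_le_mul_of_nonneg_left this (inv_nonneg.2 (ht m).le)


lemma claimB (hΩc : IsCompact Ω) (hσ : ContinuousOn σ Ω) (hσ0 : ∀ x ∈ Ω, 0 ≤ σ x)
    (A : ℝ) (b : Fin k → ℝ) (j : Fin k)
    (hmin : ∀ t : ℝ, 0 < t →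
      -(t * A) ≤ (∫ x in Ω, uu p (Function.update b j (b j - t)) x * σ x)
        - ∫ x in Ω, uu p b x * σ x) :
    (∫ x in ({x : EuclideanSpace ℝ (Fin n) |
        ∀ i, i ≠ j → ⟪x, p i⟫ + b i < ⟪x, p j⟫ + b j} ∩ Ω), σ x) ≤ A := by
  have hΩm : MeasurableSet Ω := hΩc.measurableSet
  set S : Set (EuclideanSpace ℝ (Fin n)) :=
    {x | ∀ i, i ≠ j → ⟪x, p i⟫ + b i < ⟪x, p j⟫ + b j} with hS
  have hSm : MeasurableSet S := by
    have : S = ⋂ i, {x : EuclideanSpace ℝ (Fin n) |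
        i ≠ j → ⟪x, p i⟫ + b i < ⟪x, p j⟫ + b j} := by
      ext x; simp [hS, Set.mem_iInter]
    rw [this]
    refine MeasurableSet.iInter fun i => ?_
    rcases eq_or_ne i j with rfl | h
    · have : {x : EuclideanSpace ℝ (Fin n) |
          i ≠ i → ⟪x, p i⟫ + b i < ⟪x, p i⟫ + b i} = Set.univ := by
        ext x; simp
      rw [this]; exact MeasurableSet.univ
    · have : {x : EuclideanSpace ℝ (Fin n) |
          i ≠ j → ⟪x, p i⟫ + b i < ⟪x, p j⟫ + b j}
          = {x : EuclideanSpace ℝ (Fin n) | ⟪x, p i⟫ + b i < ⟪x, p j⟫ + b j} := by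
        ext x; simp [h]
      rw [this]
      exact (isOpen_lt ((continuous_id.inner continuous_const).add continuous_const)
        ((continuous_id.inner continuous_const).add continuous_const)).measurableSet
  set t : ℕ → ℝ := fun m => 1 / (m + 1) with hT
  have ht : ∀ m, 0 < t m := fun m => by positivity
  have htend : Filter.Tendsto t Filter.atTop (nhds 0) :=
    tendsto_one_div_add_atTop_nhds_zero_nat
  set bt : ℕ → (Fin k → ℝ) := fun m => Function.update b j (b j - t m) with hbt
  have hble : ∀ m i, bt m i ≤ b i := by
    intro m i
    rcases eq_or_ne i j with rfl | h
    · simp [hbt, (ht m).le]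
    · simp [hbt, Function.update_of_ne h]
  have hb2 : ∀ m x, uu p b x ≤ uu p (bt m) x + t m := by
    intro m x
    refine uu_le fun i => ?_
    rcases eq_or_ne i j with rfl | h
    · have := le_uu p (bt m) x i
      simp only [hbt, Function.update_self] at this
      linarith
    · have := le_uu p (bt m) x i
      simp only [hbt, Function.update_of_ne h] at this
      linarith [(ht m).le]
  set Fn : ℕ → EuclideanSpace ℝ (Fin n) → ℝ :=
    fun m x => (t m)⁻¹ * ((uu p b x - uu p (bt m) x) * σ x) with hFn
  have hlim : ∀ x, Filter.Tendsto (fun m => Fn m x) Filter.atTop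
      (nhds (S.indicator σ x)) := by
    intro x
    by_cases hx : x ∈ S
    · rw [Set.indicator_of_mem hx]
      have hub : uu p b x = ⟪x, p j⟫ + b j := by
        refine le_antisymm (uu_le fun i => ?_) (le_uu p b x j)
        rcases eq_or_ne i j with rfl | h
        · exact le_refl _
        · exact (hx i h).le
      have hev : ∀ᶠ m in Filter.atTop, ∀ i, i ≠ j →
          ⟪x, p i⟫ + b i ≤ ⟪x, p j⟫ + b j - t m := by
        rw [Filter.eventually_all]
        intro i
        rcases eq_or_ne i j with rfl | h
        · exact Filter.Eventually.of_forall fun m hij => absurd rfl hij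
        · have hgap : 0 < (⟪x, p j⟫ + b j) - (⟪x, p i⟫ + b i) := by
            linarith [hx i h]
          exact (htend.eventually (gt_mem_nhds hgap)).mono fun m hm hij => by linarith
      refine Filter.Tendsto.congr' (hev.mono fun m hm => ?_) tendsto_const_nhds
      have hval : uu p (bt m) x = uu p b x - t m := by
        refine le_antisymm (uu_le fun i => ?_) ?_
        · rcases eq_or_ne i j with rfl | h
          · simp only [hbt, Function.update_self]; linarith [hub]
          · simp only [hbt, Function.update_of_ne h]
            linarith [hm i h, hub]
        · have := le_uu p (bt m) x j
          simp only [hbt, Function.update_self] at this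
          linarith [hub]
      rw [hFn]; simp only; rw [hval]
      field_simp [(ht m).ne']
      ring
    · rw [Set.indicator_of_notMem hx]
      simp only [hS, Set.mem_setOf_eq, not_forall, not_lt] at hx
      obtain ⟨i₀, hi₀ne, hi₀⟩ := hx
      have hval : ∀ m, uu p (bt m) x = uu p b x := by
        intro m
        refine le_antisymm (uu_mono (p := p) (hble m) x) (uu_le fun i => ?_)
        rcases eq_or_ne i j with rfl | h
        · have he : bt m i₀ = b i₀ := by simp [hbt, Function.update_of_ne hi₀ne]
          have := le_uu p (bt m) x i₀
          rw [he] at this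
          linarith
        · have he : bt m i = b i := by simp [hbt, Function.update_of_ne h]
          have := le_uu p (bt m) x i
          rw [he] at this
          linarith
      have : ∀ m, Fn m x = 0 := by
        intro m; rw [hFn]; simp only; rw [hval m]; ring
      simpa [this] using tendsto_const_nhds
  have hmeas : ∀ m, AEStronglyMeasurable (Fn m) (volume.restrict Ω) := by
    intro m
    exact (continuousOn_const.mul
      ((((continuous_uu p b).sub (continuous_uu p (bt m))).continuousOn).mul hσ)
      ).aestronglyMeasurable hΩm
  have hbound : ∀ m, ∀ᵐ x ∂(volume.restrict Ω), ‖Fn m x‖ ≤ σ x := by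
    intro m
    refine (ae_restrict_iff' hΩm).2 (Filter.Eventually.of_forall fun x hx => ?_)
    have h1 : 0 ≤ uu p b x - uu p (bt m) x := by
      linarith [uu_mono (p := p) (hble m) x]
    have h2 : uu p b x - uu p (bt m) x ≤ t m := by linarith [hb2 m x]
    have h3 : 0 ≤ σ x := hσ0 x hx
    have h4 : 0 ≤ Fn m x := by
      rw [hFn]; exact mul_nonneg (inv_nonneg.2 (ht m).le) (mul_nonneg h1 h3)
    rw [Real.norm_eq_abs, abs_of_nonneg h4]
    calc Fn m x ≤ (t m)⁻¹ * (t m * σ x) :=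
          mul_le_mul_of_nonneg_left (mul_le_mul_of_nonneg_right h2 h3)
            (inv_nonneg.2 (ht m).le)
      _ = σ x := by field_simp [(ht m).ne']
  have hσint : IntegrableOn σ Ω := hσ.integrableOn_compact hΩc
  have hconv := MeasureTheory.tendsto_integral_of_dominated_convergence σ hmeas hσint
    hbound (Filter.Eventually.of_forall hlim)
  have hindval : (∫ x in Ω, S.indicator σ x) = ∫ x in (S ∩ Ω), σ x := by
    rw [MeasureTheory.setIntegral_indicator hSm, Set.inter_comm]
  rw [hindval] at hconv
  refine le_of_tendsto hconv (Filter.Eventually.of_forall fun m => ?_)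
  have hint : (∫ x in Ω, Fn m x) = (t m)⁻¹ *
      ((∫ x in Ω, uu p b x * σ x) - ∫ x in Ω, uu p (bt m) x * σ x) := by
    rw [hFn]
    simp only
    rw [MeasureTheory.integral_const_mul]
    congr 1
    have : ∀ x, (uu p b x - uu p (bt m) x) * σ x
        = uu p b x * σ x - uu p (bt m) x * σ x := fun x => by ring
    simp_rw [this]
    exact MeasureTheory.integral_sub (integrableOn_uu hΩc hσ b)
      (integrableOn_uu hΩc hσ (bt m))
  rw [hint]
  have := hmin (t m) (ht m)
  calc (t m)⁻¹ * ((∫ x in Ω, uu p b x * σ x) - ∫ x in Ω, uu p (bt m) x * σ x)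
      ≤ (t m)⁻¹ * (t m * A) := by
        apply mul_le_mul_of_nonneg_left _ (inv_nonneg.2 (ht m).le)
        linarith
    _ = A := by field_simp [(ht m).ne']

end Claims

end AlexAux

set_option maxHeartbeats 1600000 in
open AlexAux in
/-- Existence in Alexandrov's theorem (weighted version): there is a height vector
`b` whose cells `W_i(b)` carry the prescribed masses `A_i`. -/
theorem alexandrov_existence (n k : ℕ)
    (Ω : Set (EuclideanSpace ℝ (Fin n))) (hΩc : IsCompact Ω) (hΩconv : Convex ℝ Ω)
    (hΩint : (interior Ω).Nonempty)
    (p : Fin k → EuclideanSpace ℝ (Fin n)) (hp : Function.Injective p)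
    (σ : EuclideanSpace ℝ (Fin n) → ℝ) (hσ : ContinuousOn σ Ω)
    (hσpos : ∀ x ∈ Ω, 0 < σ x)
    (A : Fin k → ℝ) (hA : ∀ i, 0 < A i)
    (hAsum : ∑ i, A i = ∫ x in Ω, σ x) :
    ∃ b : Fin k → ℝ, ∀ i,
      (∫ x in ({x : EuclideanSpace ℝ (Fin n) |
          ∀ j, ⟪x, p j⟫ + b j ≤ ⟪x, p i⟫ + b i} ∩ Ω), σ x) = A i := by
  classical
  rcases Nat.eq_zero_or_pos k with rfl | hk
  · exact ⟨0, fun i => i.elim0⟩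
  haveI : Nonempty (Fin k) := ⟨⟨0, hk⟩⟩
  have hΩm : MeasurableSet Ω := hΩc.measurableSet
  have hσ0 : ∀ x ∈ Ω, 0 ≤ σ x := fun x hx => (hσpos x hx).le
  set M : ℝ := ∫ x in Ω, σ x with hM
  have hM0 : 0 ≤ M := setIntegral_nonneg hΩm hσ0
  have hσint : IntegrableOn σ Ω := hσ.integrableOn_compact hΩc
  set G : (Fin k → ℝ) → ℝ := fun b => ∫ x in Ω, uu p b x * σ x with hG
  set F : (Fin k → ℝ) → ℝ := fun b => G b - ∑ i, A i * b i with hF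
  -- Lipschitz continuity of G
  have hlip : ∀ b b', |G b - G b'| ≤ M * dist b b' := by
    intro b b'
    have h1 : G b - G b' = ∫ x in Ω, (uu p b x - uu p b' x) * σ x := by
      simp only [hG]
      rw [← MeasureTheory.integral_sub (integrableOn_uu hΩc hσ b)
        (integrableOn_uu hΩc hσ b')]
      exact MeasureTheory.integral_congr_ae (Filter.Eventually.of_forall fun x => by ring)
    rw [h1]
    have habs : IntegrableOn (fun x => |(uu p b x - uu p b' x) * σ x|) Ω := by
      have h0 : IntegrableOn (fun x => uu p b x * σ x - uu p b' x * σ x) Ω :=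
        (integrableOn_uu hΩc hσ b).sub (integrableOn_uu hΩc hσ b')
      have h2 : IntegrableOn (fun x => (uu p b x - uu p b' x) * σ x) Ω :=
        h0.congr_fun (fun x _ => by ring) hΩm
      exact h2.abs
    calc |∫ x in Ω, (uu p b x - uu p b' x) * σ x|
        ≤ ∫ x in Ω, |(uu p b x - uu p b' x) * σ x| := by
          simpa [Real.norm_eq_abs, abs_mul] using
            MeasureTheory.norm_integral_le_integral_norm
              (fun x => (uu p b x - uu p b' x) * σ x)
              (μ := MeasureTheory.volume.restrict Ω)
      _ ≤ ∫ x in Ω, dist b b' * σ x := by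
          refine MeasureTheory.setIntegral_mono_on habs
            (hσint.const_mul _) hΩm fun x hx => ?_
          rw [abs_mul, abs_of_nonneg (hσ0 x hx)]
          exact mul_le_mul_of_nonneg_right (abs_uu_sub_le p b b' x) (hσ0 x hx)
      _ = M * dist b b' := by rw [MeasureTheory.integral_const_mul, hM]; ring
  have hGcont : Continuous G := by
    refine (LipschitzWith.of_dist_le_mul (K := M.toNNReal) fun b b' => ?_).continuous
    rw [Real.dist_eq, Real.coe_toNNReal M hM0]
    exact hlip b b'
  have hFcont : Continuous F := by
    exact hGcont.sub (continuous_finset_sum _ fun i _ => continuous_const.mul (continuous_apply i))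
  -- translation invariance
  have hAM : ∑ i, A i = M := hAsum
  have htrans : ∀ (c : Fin k → ℝ) (s : ℝ), F (fun i => c i - s) = F c := by
    intro c s
    have h2 : G (fun i => c i - s) = G c - s * M := by
      simp only [hG, hM]
      have h1 : ∀ x, uu p (fun i => c i - s) x * σ x
          = uu p c x * σ x - s * σ x := fun x => by rw [uu_sub_const p c s x]; ring
      simp_rw [h1]
      rw [MeasureTheory.integral_sub (integrableOn_uu hΩc hσ c) (hσint.const_mul s),
        MeasureTheory.integral_const_mul]
    have h3 : ∑ i, A i * (c i - s) = (∑ i, A i * c i) - s * M := by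
      rw [← hAM, Finset.mul_sum, ← Finset.sum_sub_distrib]
      exact Finset.sum_congr rfl fun i _ => by ring
    simp only [hF]
    rw [h2, h3]
    ring
  -- the compact set of candidates
  set K : Set (Fin k → ℝ) := {b | (∑ i, b i) = 0 ∧ F b ≤ F 0} with hK
  have hKcl : IsClosed K := by
    have : K = {b : Fin k → ℝ | (∑ i, b i) = 0} ∩ {b | F b ≤ F 0} := rfl
    rw [this]
    exact ((isClosed_eq (continuous_finset_sum _ fun i _ => continuous_apply i)
      continuous_const)).inter (isClosed_le hFcont continuous_const)
  -- lower bound for G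
  set J : Fin k → ℝ := fun i => ∫ x in Ω, ⟪x, p i⟫ * σ x with hJ
  set C : ℝ := Finset.univ.sup' Finset.univ_nonempty (fun i => |J i|) with hC
  have hCJ : ∀ i, -C ≤ J i := by
    intro i
    have := Finset.le_sup' (fun i => |J i|) (Finset.mem_univ i)
    have h2 := neg_abs_le (J i)
    linarith
  have hGlower : ∀ (b : Fin k → ℝ) (i₀ : Fin k), (∀ i, b i ≤ b i₀) →
      J i₀ + b i₀ * M ≤ G b := by
    intro b i₀ hi₀
    have h1 : ∀ x ∈ Ω, (⟪x, p i₀⟫ + b i₀) * σ x ≤ uu p b x * σ x := fun x hx =>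
      mul_le_mul_of_nonneg_right (le_uu p b x i₀) (hσ0 x hx)
    have h2 : (∫ x in Ω, (⟪x, p i₀⟫ + b i₀) * σ x) ≤ G b := by
      simp only [hG]
      refine MeasureTheory.setIntegral_mono_on ?_ (integrableOn_uu hΩc hσ b) hΩm h1
      exact ((((continuous_id.inner continuous_const).add
        continuous_const).continuousOn).mul hσ).integrableOn_compact hΩc
    have h3 : (∫ x in Ω, (⟪x, p i₀⟫ + b i₀) * σ x) = J i₀ + b i₀ * M := by
      simp only [hJ, hM]
      have he : ∀ x, (⟪x, p i₀⟫ + b i₀) * σ x = ⟪x, p i₀⟫ * σ x + b i₀ * σ x :=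
        fun x => by ring
      simp_rw [he]
      rw [MeasureTheory.integral_add ?h1 (hσint.const_mul _),
        MeasureTheory.integral_const_mul]
      case h1 =>
        exact (((continuous_id.inner continuous_const).continuousOn).mul
          hσ).integrableOn_compact hΩc
    linarith
  -- boundedness of K
  set D : ℝ := F 0 + C with hD
  set R : ℝ := max 0 (Finset.univ.sup' Finset.univ_nonempty (fun j => D / A j)) with hR
  have hR0 : 0 ≤ R := le_max_left _ _
  have hKbound : ∀ b ∈ K, ‖b‖ ≤ (k : ℝ) * R := by
    rintro b ⟨hsum, hFb⟩
    obtain ⟨i₀, -, hi₀⟩ := Finset.exists_mem_eq_sup'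
      (Finset.univ_nonempty (α := Fin k)) b
    set m : ℝ := Finset.univ.sup' Finset.univ_nonempty b with hm
    have hmb : ∀ i, b i ≤ m := fun i => Finset.le_sup' b (Finset.mem_univ i)
    have hGb : J i₀ + m * M ≤ G b := by
      rw [hi₀]
      exact hGlower b i₀ (fun i => by rw [← hi₀]; exact hmb i)
    have hF0 : F 0 = G 0 := by simp [hF]
    have hFb' : G b - ∑ i, A i * b i ≤ F 0 := hFb
    have hsumA : ∑ i, A i * (m - b i) ≤ D := by
      have hexp : ∑ i, A i * (m - b i) = (∑ i, A i) * m - ∑ i, A i * b i := by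
        rw [Finset.sum_mul, ← Finset.sum_sub_distrib]
        exact Finset.sum_congr rfl fun i _ => by ring
      rw [hexp, hAM, hD]
      have := hCJ i₀
      linarith
    have hterm : ∀ j, m - b j ≤ R := by
      intro j
      have hnn : ∀ i ∈ Finset.univ, i ≠ j → 0 ≤ A i * (m - b i) := fun i _ _ =>
        mul_nonneg (hA i).le (by linarith [hmb i])
      have h1 : A j * (m - b j) ≤ ∑ i, A i * (m - b i) :=
        Finset.single_le_sum (f := fun i => A i * (m - b i))
          (fun i _ => mul_nonneg (hA i).le (by linarith [hmb i])) (Finset.mem_univ j)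
      have h2 : A j * (m - b j) ≤ D := le_trans h1 hsumA
      have h3 : m - b j ≤ D / A j := (le_div_iff₀ (hA j)).2 (by linarith)
      calc m - b j ≤ D / A j := h3
        _ ≤ Finset.univ.sup' Finset.univ_nonempty (fun j => D / A j) :=
            Finset.le_sup' (fun j => D / A j) (Finset.mem_univ j)
        _ ≤ R := le_max_right _ _
    have hm0 : 0 ≤ m := by
      by_contra h
      push_neg at h
      have : ∑ i, b i < 0 := by
        have : ∀ i ∈ Finset.univ, b i ≤ m := fun i _ => hmb i
        have hle : ∑ i, b i ≤ ∑ _i : Fin k, m := Finset.sum_le_sum this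
        have : ∑ _i : Fin k, m = (k : ℝ) * m := by
          rw [Finset.sum_const, Finset.card_fin]; ring
        nlinarith [(Nat.cast_pos (α := ℝ)).2 hk]
      linarith [hsum ▸ this]
    have hlow : ∀ j, -R ≤ b j := fun j => by linarith [hterm j, hm0]
    have hup : ∀ j, b j ≤ (k : ℝ) * R - R := by
      intro j
      have hsum' : b i₀ = -∑ i ∈ Finset.univ.erase i₀, b i := by
        have := Finset.add_sum_erase Finset.univ b (Finset.mem_univ i₀)
        rw [hsum] at this
        linarith
      have hbnd : ∑ i ∈ Finset.univ.erase i₀, b i ≥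
          -(((Finset.univ.erase i₀).card : ℝ) * R) := by
        calc ∑ i ∈ Finset.univ.erase i₀, b i
            ≥ ∑ _i ∈ Finset.univ.erase i₀, (-R) :=
              Finset.sum_le_sum (fun i _ => hlow i)
          _ = -(((Finset.univ.erase i₀).card : ℝ) * R) := by
              rw [Finset.sum_const]; simp [mul_comm]
      have hcard : ((Finset.univ.erase i₀).card : ℝ) = (k : ℝ) - 1 := by
        rw [Finset.card_erase_of_mem (Finset.mem_univ i₀), Finset.card_fin,
          Nat.cast_sub hk, Nat.cast_one]
      have : b i₀ ≤ ((k : ℝ) - 1) * R := by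
        rw [hsum']
        rw [hcard] at hbnd
        linarith
      calc b j ≤ m := hmb j
        _ = b i₀ := hi₀
        _ ≤ ((k : ℝ) - 1) * R := this
        _ = (k : ℝ) * R - R := by ring
    have hkR : 0 ≤ (k : ℝ) * R := by positivity
    rw [pi_norm_le_iff_of_nonneg hkR]
    intro i
    rw [Real.norm_eq_abs, abs_le]
    have hk1 : (1:ℝ) ≤ (k:ℝ) := Nat.one_le_cast.2 hk
    constructor
    · nlinarith [hlow i, hR0, hk1]
    · nlinarith [hup i, hR0, hk1]
  have hKbd : Bornology.IsBounded K := by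
    have : K ⊆ Metric.closedBall 0 ((k : ℝ) * R) := by
      intro b hb
      rw [Metric.mem_closedBall, dist_zero_right]
      exact hKbound b hb
    exact Metric.isBounded_closedBall.subset this
  have hKcpt : IsCompact K := Metric.isCompact_of_isClosed_isBounded hKcl hKbd
  have hK0 : (0 : Fin k → ℝ) ∈ K := ⟨by simp, le_refl _⟩
  obtain ⟨b, hbK, hbmin⟩ := hKcpt.exists_isMinOn ⟨0, hK0⟩ hFcont.continuousOn
  -- global minimality
  have hglob : ∀ c, F b ≤ F c := by
    intro c
    set s : ℝ := (∑ i, c i) / k with hs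
    set c' : Fin k → ℝ := fun i => c i - s with hc'
    have hFc' : F c' = F c := htrans c s
    have hsum' : ∑ i, c' i = 0 := by
      rw [hc']
      simp only
      rw [Finset.sum_sub_distrib, Finset.sum_const, Finset.card_fin, hs]
      have : (k : ℝ) ≠ 0 := Nat.cast_ne_zero.2 hk.ne'
      rw [nsmul_eq_mul]; field_simp; ring
    by_cases h : F c' ≤ F 0
    · exact le_trans (isMinOn_iff.1 hbmin c' ⟨hsum', h⟩) hFc'.le
    · push_neg at h
      calc F b ≤ F 0 := hbK.2
        _ ≤ F c' := h.le
        _ = F c := hFc'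
  -- derivative inequalities
  have hsum_upd : ∀ (j : Fin k) (v : ℝ),
      ∑ i, A i * Function.update b j v i = (∑ i, A i * b i) + A j * (v - b j) := by
    intro j v
    have heq : (fun i => A i * Function.update b j v i)
        = Function.update (fun i => A i * b i) j (A j * v) := by
      ext i
      rcases eq_or_ne i j with rfl | h
      · simp
      · simp [Function.update_of_ne h]
    rw [heq, Finset.sum_update_of_mem (Finset.mem_univ j),
      Finset.sum_sdiff_eq_sub (Finset.singleton_subset_iff.2 (Finset.mem_univ j)),
      Finset.sum_singleton]
    ring
  refine ⟨b, fun j => ?_⟩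
  have hclaimA : A j ≤ ∫ x in ({x : EuclideanSpace ℝ (Fin n) |
      ∀ i, ⟪x, p i⟫ + b i ≤ ⟪x, p j⟫ + b j} ∩ Ω), σ x := by
    refine claimA hΩc hσ hσ0 (A j) b j fun t ht => ?_
    have h1 := hglob (Function.update b j (b j + t))
    have h2 := hsum_upd j (b j + t)
    simp only [hF, hG] at h1
    rw [h2] at h1
    have h3 : A j * (b j + t - b j) = t * A j := by ring
    rw [h3] at h1
    linarith
  have hclaimB : (∫ x in ({x : EuclideanSpace ℝ (Fin n) |
      ∀ i, i ≠ j → ⟪x, p i⟫ + b i < ⟪x, p j⟫ + b j} ∩ Ω), σ x) ≤ A j := by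
    refine claimB hΩc hσ hσ0 (A j) b j fun t ht => ?_
    have h1 := hglob (Function.update b j (b j - t))
    have h2 := hsum_upd j (b j - t)
    simp only [hF, hG] at h1
    rw [h2] at h1
    have h3 : A j * (b j - t - b j) = -(t * A j) := by ring
    rw [h3] at h1
    linarith
  -- the two cells agree up to measure zero
  set W : Set (EuclideanSpace ℝ (Fin n)) :=
    {x | ∀ i, ⟪x, p i⟫ + b i ≤ ⟪x, p j⟫ + b j} with hW
  set S : Set (EuclideanSpace ℝ (Fin n)) :=
    {x | ∀ i, i ≠ j → ⟪x, p i⟫ + b i < ⟪x, p j⟫ + b j} with hS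
  have hSW : S ⊆ W := by
    intro x hx i
    rcases eq_or_ne i j with rfl | h
    · exact le_refl _
    · exact (hx i h).le
  have hnull : MeasureTheory.volume (W \ S) = 0 := by
    have hsub : W \ S ⊆ ⋃ i, {x : EuclideanSpace ℝ (Fin n) |
        i ≠ j ∧ ⟪x, p i - p j⟫ = b j - b i} := by
      rintro x ⟨hxW, hxS⟩
      simp only [hS, Set.mem_setOf_eq, not_forall, not_lt] at hxS
      obtain ⟨i, hij, hge⟩ := hxS
      refine Set.mem_iUnion.2 ⟨i, hij, ?_⟩
      have hle := hxW i
      have heq : ⟪x, p i⟫ + b i = ⟪x, p j⟫ + b j := le_antisymm hle hge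
      rw [inner_sub_right]
      linarith
    refine measure_mono_null hsub (MeasureTheory.measure_iUnion_null fun i => ?_)
    rcases eq_or_ne i j with rfl | h
    · have : {x : EuclideanSpace ℝ (Fin n) |
          i ≠ i ∧ ⟪x, p i - p i⟫ = b i - b i} = ∅ := by
        ext x; simp
      rw [this]; exact MeasureTheory.measure_empty
    · refine measure_mono_null (fun x hx => hx.2) ?_
      exact hyperplane_null (p i - p j) (sub_ne_zero.2 (fun hpe => h (hp hpe))) (b j - b i)
  have haeeq : (S ∩ Ω : Set (EuclideanSpace ℝ (Fin n))) =ᵐ[MeasureTheory.volume]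
      (W ∩ Ω : Set (EuclideanSpace ℝ (Fin n))) := by
    rw [MeasureTheory.ae_eq_set]
    constructor
    · have hsub : (S ∩ Ω) \ (W ∩ Ω) ⊆ (∅ : Set (EuclideanSpace ℝ (Fin n))) :=
        fun x hx => (hx.2 ⟨hSW hx.1.1, hx.1.2⟩).elim
      exact measure_mono_null hsub (by simp)
    · refine measure_mono_null (fun x hx => ?_) hnull
      exact ⟨hx.1.1, fun hxS => hx.2 ⟨hxS, hx.1.2⟩⟩
  have hIeq : (∫ x in (S ∩ Ω), σ x) = ∫ x in (W ∩ Ω), σ x :=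
    MeasureTheory.setIntegral_congr_set haeeq
  rw [hIeq] at hclaimB
  exact le_antisymm hclaimB hclaimA
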